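/- Let A : X → Y and B : Y → X be bounded operators between Banach spaces and let λ ≠ 0. Then AB − λ is upper semi-Fredholm (closed range and finite-dimensional kernel) if and only if BA − λ is upper semi-Fredholm. -/

import Mathlib

private lemma aux_closed {X Y : Type*} [NormedAddCommGroup X] [NormedSpace ℂ X]
    [NormedAddCommGroup Y] [NormedSpace ℂ Y]
    (A : X →L[ℂ] Y) (B : Y →L[ℂ] X) (l : ℂ) (hl : l ≠ 0)
    (h : IsClosed (Set.range (B.comp A - l • (1 : X →L[ℂ] X)))) :
    IsClosed (Set.range (A.comp B - l • (1 : Y →L[ℂ] Y))) := by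
  set T := A.comp B - l • (1 : Y →L[ℂ] Y) with hT
  set S := B.comp A - l • (1 : X →L[ℂ] X) with hS
  apply isClosed_of_closure_subset
  intro y hy
  have hBy : B y ∈ closure (Set.range S) := by
    refine map_mem_closure B.continuous hy ?_
    rintro _ ⟨u, rfl⟩
    exact ⟨B u, by simp [hS, hT, ContinuousLinearMap.sub_apply, map_sub, map_smul]⟩
  rw [h.closure_eq] at hBy
  obtain ⟨x, hx⟩ := hBy
  refine ⟨l⁻¹ • (A x - y), ?_⟩
  have hx' : B (A x) - l • x = B y := by
    simpa [hS, ContinuousLinearMap.sub_apply] using hx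
  have key : T (A x) - T y = l • y := by
    simp only [hT, ContinuousLinearMap.sub_apply, ContinuousLinearMap.comp_apply,
      ContinuousLinearMap.smul_apply, ContinuousLinearMap.one_apply]
    have : B (A x) = B y + l • x := by rw [← hx']; abel
    rw [this]
    simp only [map_add, map_smul]
    abel
  rw [map_smul, map_sub, key]
  rw [smul_smul, inv_mul_cancel₀ hl, one_smul]

private lemma aux_fd {X Y : Type*} [NormedAddCommGroup X] [NormedSpace ℂ X]
    [NormedAddCommGroup Y] [NormedSpace ℂ Y]
    (A : X →L[ℂ] Y) (B : Y →L[ℂ] X) (l : ℂ) (hl : l ≠ 0)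
    (h : FiniteDimensional ℂ (LinearMap.ker ((A.comp B - l • (1 : Y →L[ℂ] Y) : Y →L[ℂ] Y) : Y →ₗ[ℂ] Y))) :
    FiniteDimensional ℂ (LinearMap.ker ((B.comp A - l • (1 : X →L[ℂ] X) : X →L[ℂ] X) : X →ₗ[ℂ] X)) := by
  set T := A.comp B - l • (1 : Y →L[ℂ] Y) with hT
  set S := B.comp A - l • (1 : X →L[ℂ] X) with hS
  have hker : ∀ x : X, x ∈ LinearMap.ker (S : X →ₗ[ℂ] X) → B (A x) = l • x := by
    intro x hx
    have h1 : S x = 0 := hx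
    rw [hS] at h1
    simp only [ContinuousLinearMap.sub_apply, ContinuousLinearMap.comp_apply,
      ContinuousLinearMap.smul_apply, ContinuousLinearMap.one_apply] at h1
    exact sub_eq_zero.mp h1
  have hmaps : ∀ x ∈ LinearMap.ker (S : X →ₗ[ℂ] X), (A : X →ₗ[ℂ] Y) x ∈ LinearMap.ker (T : Y →ₗ[ℂ] Y) := by
    intro x hx
    have : T (A x) = 0 := by
      rw [hT]
      simp only [ContinuousLinearMap.sub_apply, ContinuousLinearMap.comp_apply,
        ContinuousLinearMap.smul_apply, ContinuousLinearMap.one_apply]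
      rw [hker x hx, map_smul, sub_self]
    exact this
  let f := (A : X →ₗ[ℂ] Y).restrict hmaps
  have hinj : Function.Injective f := by
    intro x y hxy
    have hA : A (x : X) = A (y : X) := congrArg Subtype.val hxy
    have : l • (x : X) = l • (y : X) := by
      rw [← hker x x.2, ← hker y y.2, hA]
    exact Subtype.ext (smul_right_injective X hl this)
  exact FiniteDimensional.of_injective f hinj

/-- For bounded operators and `λ ≠ 0`, `AB - λ` is upper semi-Fredholm
(closed range and finite-dimensional kernel) iff `BA - λ` is. -/
theorem stmt8 {X Y : Type*} [NormedAddCommGroup X] [NormedSpace ℂ X] [CompleteSpace X]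
    [NormedAddCommGroup Y] [NormedSpace ℂ Y] [CompleteSpace Y]
    (A : X →L[ℂ] Y) (B : Y →L[ℂ] X) (l : ℂ) (hl : l ≠ 0) :
    (IsClosed (Set.range (A.comp B - l • (1 : Y →L[ℂ] Y))) ∧
      FiniteDimensional ℂ (LinearMap.ker ((A.comp B - l • (1 : Y →L[ℂ] Y) : Y →L[ℂ] Y) : Y →ₗ[ℂ] Y))) ↔
    (IsClosed (Set.range (B.comp A - l • (1 : X →L[ℂ] X))) ∧
      FiniteDimensional ℂ (LinearMap.ker ((B.comp A - l • (1 : X →L[ℂ] X) : X →L[ℂ] X) : X →ₗ[ℂ] X))) := by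
  constructor
  · rintro ⟨hc, hf⟩
    exact ⟨aux_closed B A l hl hc, aux_fd A B l hl hf⟩
  · rintro ⟨hc, hf⟩
    exact ⟨aux_closed A B l hl hc, aux_fd B A l hl hf⟩
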